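/- arXiv:1307.1956 — 8 statements merged into one kernel-verified Lean document; each statement's English description precedes it below -/
import Mathlib

section
/- Let K be a valued field with valuation ring O, maximal ideal m, and residue field F = O/m. Let f ∈ O[X] be a monic polynomial whose reduction f̄ ∈ F[X] has no zero in F. Then for every x ∈ K, f(x) ≠ 0 and f(x)⁻¹ ∈ O. -/
open Polynomial

/-- If `a` is a unit of a valuation subring, then its image in `K` is nonzero
and its inverse in `K` lies in `O`. -/
lemma aux_unit {K : Type*} [Field K] (O : ValuationSubring K) {a : O}
    (ha : IsUnit a) : (a : K) ≠ 0 ∧ ((a : K))⁻¹ ∈ O := by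
  obtain ⟨u, rfl⟩ := ha
  have h1 : ((u : O) : K) * (((u⁻¹ : Oˣ) : O) : K) = 1 := by
    rw [← Subring.coe_mul]
    norm_cast
    simp
  have hne : ((u : O) : K) ≠ 0 := by
    intro h; rw [h, zero_mul] at h1; exact zero_ne_one h1
  refine ⟨hne, ?_⟩
  rw [inv_eq_of_mul_eq_one_right h1]
  exact SetLike.coe_mem _

lemma aux_resid {K : Type*} [Field K] (O : ValuationSubring K) (f : Polynomial O)
    (y : O) (h : Polynomial.eval (IsLocalRing.residue O y)
      (f.map (IsLocalRing.residue O)) ≠ 0) : IsUnit (f.eval y) := by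
  rw [eval_map, eval₂_hom] at h
  rw [← IsLocalRing.notMem_maximalIdeal] at *
  intro hm
  exact h ((Ideal.Quotient.eq_zero_iff_mem).mpr hm)

/-- For a valued field `K` with valuation ring `O` and residue field
`F = O/m`, if `f ∈ O[X]` is monic and its reduction mod `m` has no zero in `F`,
then `f(x) ≠ 0` for every `x ∈ K` and `f(x)⁻¹ ∈ O`. -/
theorem statement0 (K : Type*) [Field K] (O : ValuationSubring K)
    (f : Polynomial O) (hf : f.Monic)
    (hres : ∀ z : IsLocalRing.ResidueField O,
      Polynomial.eval z (f.map (IsLocalRing.residue O)) ≠ 0) :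
    ∀ x : K, Polynomial.eval x (f.map O.subtype) ≠ 0 ∧
      (Polynomial.eval x (f.map O.subtype))⁻¹ ∈ O := by
  intro x
  by_cases hx : x ∈ O
  · -- x ∈ O : f(x) is a unit of O since its residue is nonzero
    set y : O := ⟨x, hx⟩ with hy
    have hev : Polynomial.eval x (f.map O.subtype) = ((f.eval y : O) : K) := by
      rw [eval_map, show x = O.subtype y from rfl, eval₂_hom]; rfl
    have hu : IsUnit (f.eval y) := aux_resid O f y (hres _)
    rw [hev]
    exact aux_unit O hu
  · -- x ∉ O : x⁻¹ ∈ m, use the reversed polynomial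
    have hxne : x ≠ 0 := by rintro rfl; exact hx (zero_mem O)
    have hxinv : x⁻¹ ∈ O := (O.mem_or_inv_mem x).resolve_left hx
    set t : O := ⟨x⁻¹, hxinv⟩ with ht
    have htm : t ∈ IsLocalRing.maximalIdeal O := by
      rw [IsLocalRing.mem_maximalIdeal]
      intro hu
      obtain ⟨hne, hmem⟩ := aux_unit O hu
      apply hx
      have : ((t : K))⁻¹ = x := by simp [ht]
      rwa [this] at hmem
    -- unit: eval of reverse f at t
    have hres0 : IsUnit ((reverse f).eval t) := by
      rw [← IsLocalRing.notMem_maximalIdeal]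
      intro hm
      have h1 : IsLocalRing.residue O ((reverse f).eval t) = 0 :=
        (Ideal.Quotient.eq_zero_iff_mem).mpr hm
      have ht0 : IsLocalRing.residue O t = 0 :=
        (Ideal.Quotient.eq_zero_iff_mem).mpr htm
      rw [← eval₂_hom, ht0] at h1
      rw [show (eval₂ (IsLocalRing.residue O) 0 (reverse f)) =
        IsLocalRing.residue O ((reverse f).coeff 0) by
          rw [← eval_map, ← coeff_zero_eq_eval_zero, coeff_map]] at h1
      rw [coeff_zero_reverse, hf.leadingCoeff, map_one] at h1
      exact one_ne_zero h1
    haveI : Invertible x := invertibleOfNonzero hxne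
    have hkey : eval₂ O.subtype (⅟ x) (reverse f) * x ^ f.natDegree =
        eval₂ O.subtype x f := eval₂_reverse_mul_pow O.subtype x f
    have hinvx : (⅟ x) = x⁻¹ := invOf_eq_inv x
    have hevt : eval₂ O.subtype (⅟ x) (reverse f) = (((reverse f).eval t : O) : K) := by
      rw [hinvx, show x⁻¹ = O.subtype t from rfl, eval₂_hom]; rfl
    obtain ⟨hne, hmem⟩ := aux_unit O hres0
    have heq : Polynomial.eval x (f.map O.subtype) =
        (((reverse f).eval t : O) : K) * x ^ f.natDegree := by
      rw [eval_map, ← hkey, hevt]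
    constructor
    · rw [heq]
      exact mul_ne_zero hne (pow_ne_zero _ hxne)
    · rw [heq, mul_inv, ← inv_pow]
      exact mul_mem hmem (pow_mem hxinv _)
end

section
/- Let K be a valued field with valuation ring O, maximal ideal m, residue field F. Let f ∈ O[X] be monic with f̄ having no zero in F, and let a ∈ K. Then the set U_{f,a} = {f(x)⁻¹ − f(a)⁻¹ : x ∈ K} is contained in O. -/
open Polynomial

lemma key_val_le (K : Type*) [Field K] (O : ValuationSubring K)
    (f : Polynomial O) (hf : f.Monic)
    (hres : ∀ z : IsLocalRing.ResidueField O,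
      Polynomial.eval z (f.map (IsLocalRing.residue O)) ≠ 0)
    (x : K) : 1 ≤ O.valuation (Polynomial.eval x (f.map O.subtype)) := by
  by_cases hx : x ∈ O
  · -- x ∈ O : f(x) is a unit of O, valuation 1
    lift x to O using hx
    have he : Polynomial.eval (O.subtype x) (f.map O.subtype) = O.subtype (f.eval x) := by
      rw [eval_map, eval₂_at_apply]
    have hres' : IsLocalRing.residue O (f.eval x) ≠ 0 := by
      have : Polynomial.eval (IsLocalRing.residue O x) (f.map (IsLocalRing.residue O)) =
          IsLocalRing.residue O (f.eval x) := by
        rw [eval_map, eval₂_at_apply]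
      rw [← this]
      exact hres _
    have hunit : IsUnit (f.eval x) := by
      rw [← IsLocalRing.notMem_maximalIdeal]
      intro hm
      exact hres' (Ideal.Quotient.eq_zero_iff_mem.mpr hm)
    have := (O.valuation_eq_one_iff (f.eval x)).mp hunit
    have he' : Polynomial.eval (x : K) (f.map O.subtype) = ((f.eval x : O) : K) := he
    rw [he', this]
  · -- x ∉ O : 1 < v x, leading term dominates
    have hvx : 1 < O.valuation x := by
      by_contra h
      exact hx (O.mem_of_valuation_le_one x (not_lt.mp h))
    have hx0 : x ≠ 0 := by
      rintro rfl
      simp at hvx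
    have hvx0 : O.valuation x ≠ 0 := by
      simpa using hx0
    set n := f.natDegree with hn
    have hdeg : (f.map O.subtype).natDegree < n + 1 := by
      have : (f.map O.subtype).natDegree ≤ n := Polynomial.natDegree_map_le
      omega
    rw [Polynomial.eval_eq_sum_range' hdeg]
    have hcoeff : ∀ i, (f.map O.subtype).coeff i = O.subtype (f.coeff i) := fun i =>
      Polynomial.coeff_map _ _
    have hlead : (f.map O.subtype).coeff n = 1 := by
      rw [hcoeff, Polynomial.Monic.coeff_natDegree hf, map_one]
    have hvn : O.valuation ((f.map O.subtype).coeff n * x ^ n) = O.valuation x ^ n := by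
      rw [hlead, one_mul, map_pow]
    have hvn0 : O.valuation ((f.map O.subtype).coeff n * x ^ n) ≠ 0 := by
      rw [hvn]
      exact pow_ne_zero _ hvx0
    have heq : O.valuation (∑ i ∈ Finset.range (n + 1), (f.map O.subtype).coeff i * x ^ i) =
        O.valuation ((f.map O.subtype).coeff n * x ^ n) := by
      apply Valuation.map_sum_eq_of_lt _ (Finset.self_mem_range_succ n)
      intro i hi
      simp only [Finset.mem_sdiff, Finset.mem_range, Finset.mem_singleton] at hi
      have hin : i < n := by omega
      rw [hvn]
      calc O.valuation ((f.map O.subtype).coeff i * x ^ i)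
          ≤ O.valuation x ^ i := by
            rw [map_mul, map_pow]
            have : O.valuation ((f.map O.subtype).coeff i) ≤ 1 := by
              rw [hcoeff]; exact O.valuation_le_one _
            calc O.valuation ((f.map O.subtype).coeff i) * O.valuation x ^ i
                ≤ 1 * O.valuation x ^ i := by
                  exact mul_le_mul_left this _
              _ = O.valuation x ^ i := one_mul _
        _ < O.valuation x ^ n := by
            exact pow_lt_pow_right₀ hvx hin
    rw [heq, hvn]
    exact one_le_pow₀ hvx.le

lemma key_inv_mem (K : Type*) [Field K] (O : ValuationSubring K)
    (f : Polynomial O) (hf : f.Monic)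
    (hres : ∀ z : IsLocalRing.ResidueField O,
      Polynomial.eval z (f.map (IsLocalRing.residue O)) ≠ 0)
    (x : K) : (Polynomial.eval x (f.map O.subtype))⁻¹ ∈ O := by
  apply O.mem_of_valuation_le_one
  rw [map_inv₀]
  have h := key_val_le K O f hf hres x
  exact inv_le_one_of_one_le₀ h

/-- For a valued field `K` with valuation ring `O`, `f ∈ O[X]` monic whose
reduction has no zero in the residue field, and `a ∈ K`, the set
`U_{f,a} = {f(x)⁻¹ − f(a)⁻¹ : x ∈ K}` is contained in `O`. -/
theorem statement1 (K : Type*) [Field K] (O : ValuationSubring K)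
    (f : Polynomial O) (hf : f.Monic)
    (hres : ∀ z : IsLocalRing.ResidueField O,
      Polynomial.eval z (f.map (IsLocalRing.residue O)) ≠ 0)
    (a : K) :
    ∀ x : K, (Polynomial.eval x (f.map O.subtype))⁻¹ -
      (Polynomial.eval a (f.map O.subtype))⁻¹ ∈ O := by
  intro x
  exact sub_mem (key_inv_mem K O f hf hres x) (key_inv_mem K O f hf hres a)
end

section
/- Let K be a henselian valued field with valuation ring O, maximal ideal m, residue field F. Let f ∈ O[X] be monic such that f̄ has no zero in F, and let a ∈ O with f'(a) ∉ m. Then m ⊆ {f(x)⁻¹ − f(a)⁻¹ : x ∈ K}. -/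
/-- For a henselian valued field `K` with valuation ring `O`, maximal
ideal `m`, `f ∈ O[X]` monic whose reduction has no zero in the residue field, and
`a ∈ O` with `f'(a) ∉ m`, we have `m ⊆ {f(x)⁻¹ − f(a)⁻¹ : x ∈ K}`. -/
theorem statement2 (K : Type*) [Field K] (O : ValuationSubring K) [HenselianLocalRing O]
    (f : Polynomial O) (hf : f.Monic)
    (hres : ∀ z : IsLocalRing.ResidueField O,
      Polynomial.eval z (f.map (IsLocalRing.residue O)) ≠ 0)
    (a : O) (ha : Polynomial.eval a f.derivative ∉ IsLocalRing.maximalIdeal O) :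
    ∀ u ∈ IsLocalRing.maximalIdeal O, ∃ x : K,
      (u : K) = (Polynomial.eval x (f.map O.subtype))⁻¹ -
        (Polynomial.eval (a : K) (f.map O.subtype))⁻¹ := by
  intro u hu
  -- f(a) is a unit
  have hfa : IsUnit (Polynomial.eval a f) := by
    rw [← IsLocalRing.notMem_maximalIdeal]
    intro h
    apply hres (IsLocalRing.residue O a)
    rw [Polynomial.eval_map, Polynomial.eval₂_at_apply]
    exact Ideal.Quotient.eq_zero_iff_mem.mpr h
  obtain ⟨vu, hvu⟩ := hfa
  -- c = u + f(a)⁻¹ is a unit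
  have hc : IsUnit (u + ((vu⁻¹ : Oˣ) : O)) := by
    by_contra h
    have hcm : u + ((vu⁻¹ : Oˣ) : O) ∈ IsLocalRing.maximalIdeal O :=
      (IsLocalRing.mem_maximalIdeal _).mpr h
    have hw : ((vu⁻¹ : Oˣ) : O) ∈ IsLocalRing.maximalIdeal O := by
      simpa using Ideal.sub_mem _ hcm hu
    exact (IsLocalRing.notMem_maximalIdeal.mpr (vu⁻¹).isUnit) hw
  obtain ⟨cu, hcu⟩ := hc
  -- degree of f is positive
  have hdeg : 0 < f.natDegree := by
    rcases Nat.eq_zero_or_pos f.natDegree with h0 | h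
    · exfalso
      apply ha
      have hd : f.derivative = 0 := by
        rw [Polynomial.eq_C_of_natDegree_eq_zero h0]; simp
      rw [hd]
      simp
    · exact h
  -- the polynomial g = f - C (cu⁻¹)
  set g : Polynomial O := f - Polynomial.C ((cu⁻¹ : Oˣ) : O) with hg
  have hgmonic : g.Monic := by
    have : g = f + Polynomial.C (-((cu⁻¹ : Oˣ) : O)) := by
      rw [hg, Polynomial.C_neg]; ring
    rw [this]
    apply hf.add_of_left
    calc (Polynomial.C (-((cu⁻¹ : Oˣ) : O))).degree ≤ 0 := Polynomial.degree_C_le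
      _ < f.degree := Polynomial.natDegree_pos_iff_degree_pos.mp hdeg
  -- g(a) ∈ m
  have h2 : (cu : O) * (Polynomial.eval a g) = u * (vu : O) := by
    rw [hg, Polynomial.eval_sub, Polynomial.eval_C, ← hvu, mul_sub,
      Units.mul_inv, hcu, add_mul, Units.inv_mul]
    ring
  have hga : Polynomial.eval a g ∈ IsLocalRing.maximalIdeal O := by
    have h3 : Polynomial.eval a g = ((cu⁻¹ : Oˣ) : O) * (u * (vu : O)) := by
      rw [← h2, ← mul_assoc, Units.inv_mul, one_mul]
    rw [h3]
    exact Ideal.mul_mem_left _ _ (Ideal.mul_mem_right _ _ hu)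
  -- g'(a) is a unit
  have hga' : IsUnit (Polynomial.eval a g.derivative) := by
    have : g.derivative = f.derivative := by
      rw [hg, Polynomial.derivative_sub, Polynomial.derivative_C, sub_zero]
    rw [this, ← IsLocalRing.notMem_maximalIdeal] at *
    exact ha
  -- apply henselian property
  obtain ⟨b, hb, -⟩ := HenselianLocalRing.is_henselian g hgmonic a hga hga'
  have hfb : Polynomial.eval b f = ((cu⁻¹ : Oˣ) : O) := by
    have := hb
    rw [Polynomial.IsRoot, hg, Polynomial.eval_sub, Polynomial.eval_C,
      sub_eq_zero] at this
    exact this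
  refine ⟨(b : K), ?_⟩
  have e1 : ∀ y : O, Polynomial.eval (y : K) (f.map O.subtype)
      = ((Polynomial.eval y f : O) : K) := fun y => by
    rw [Polynomial.eval_map]
    exact Polynomial.eval₂_at_apply O.subtype y
  rw [e1 b, e1 a, hfb, ← hvu]
  have einv1 : ((((cu⁻¹ : Oˣ) : O) : K))⁻¹ = (((cu : Oˣ) : O) : K) :=
    inv_eq_of_mul_eq_one_left (by exact_mod_cast cu.mul_inv)
  have einv2 : ((((vu : Oˣ) : O) : K))⁻¹ = (((vu⁻¹ : Oˣ) : O) : K) :=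
    inv_eq_of_mul_eq_one_right (by exact_mod_cast vu.mul_inv)
  rw [einv1, einv2, hcu]
  push_cast
  ring
end

section
/- Let K be a henselian valued field with valuation ring O, maximal ideal m, residue field F. Let f ∈ O[X] be monic such that f̄ has no zero in F, and suppose there exists a ∈ O with f'(a) ∉ m. Then the set U = f(K)⁻¹ − f(K)⁻¹ = {f(x)⁻¹ − f(y)⁻¹ : x, y ∈ K} satisfies m ⊆ U ⊆ O. -/
open Polynomial IsLocalRing


/-- For a henselian valued field `K` with valuation ring `O` and maximal
ideal `m`, `f ∈ O[X]` monic whose reduction has no zero in the residue field, such that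
there is `a ∈ O` with `f'(a) ∉ m`, the set `U = {f(x)⁻¹ − f(y)⁻¹ : x, y ∈ K}` satisfies
`m ⊆ U ⊆ O`. -/
theorem statement3 (K : Type*) [Field K] (O : ValuationSubring K) [HenselianLocalRing O]
    (f : Polynomial O) (hf : f.Monic)
    (hres : ∀ z : IsLocalRing.ResidueField O,
      Polynomial.eval z (f.map (IsLocalRing.residue O)) ≠ 0)
    (ha : ∃ a : O, Polynomial.eval a f.derivative ∉ IsLocalRing.maximalIdeal O) :
    (∀ u ∈ IsLocalRing.maximalIdeal O, ∃ x y : K,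
      (u : K) = (Polynomial.eval x (f.map O.subtype))⁻¹ -
        (Polynomial.eval y (f.map O.subtype))⁻¹) ∧
    (∀ x y : K, (Polynomial.eval x (f.map O.subtype))⁻¹ -
        (Polynomial.eval y (f.map O.subtype))⁻¹ ∈ O) := by
  obtain ⟨a, hda⟩ := ha
  -- evaluation of the mapped polynomial at elements of O
  have evalK : ∀ b : O, Polynomial.eval (b : K) (f.map O.subtype) = ↑(f.eval b) := by
    intro b
    rw [Polynomial.eval_map]
    exact Polynomial.eval₂_at_apply O.subtype b
  -- f.eval b is a unit for every b : O
  have hunit : ∀ b : O, IsUnit (f.eval b) := by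
    intro b
    have h0 := hres (IsLocalRing.residue O b)
    rw [Polynomial.eval_map, Polynomial.eval₂_at_apply] at h0
    by_contra h
    exact h0 (by
      rw [← RingHom.mem_ker, IsLocalRing.ker_residue]
      exact h)
  -- degree of f is positive
  have hdeg : 0 < f.natDegree := by
    rcases Nat.eq_zero_or_pos f.natDegree with h | h
    · exfalso
      rw [hf.natDegree_eq_zero] at h
      subst h
      simp at hda
    · exact h
  -- the inverse of any evaluation lies in O
  have hinv : ∀ x : K, (Polynomial.eval x (f.map O.subtype))⁻¹ ∈ O := by
    intro x
    by_cases hx : x ∈ O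
    · rw [show x = ((⟨x, hx⟩ : O) : K) from rfl, evalK]
      obtain ⟨c, hc⟩ := hunit ⟨x, hx⟩
      rw [← hc]
      have : ((c : O) : K)⁻¹ = ((↑(c⁻¹ : Oˣ) : O) : K) := by
        refine inv_eq_of_mul_eq_one_right ?_
        rw [← Subring.coe_mul]
        norm_cast
        exact c.mul_inv
      rw [this]
      exact SetLike.coe_mem _
    · -- x ∉ O, so v x > 1 and v (f(x)) = v(x)^n > 1
      set v := O.valuation with hv
      have hx1 : 1 < v x := by
        by_contra h
        exact hx (O.mem_of_valuation_le_one x (not_lt.mp h))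
      have hx0 : v x ≠ 0 := (zero_lt_one.trans hx1).ne'
      set F := f.map O.subtype with hF
      have hFdeg : F.natDegree = f.natDegree := hf.natDegree_map O.subtype
      set n := f.natDegree with hn
      have hvF : v (Polynomial.eval x F) = v x ^ n := by
        rw [Polynomial.eval_eq_sum_range, hFdeg, Finset.sum_range_succ]
        have hlead : F.coeff n = 1 := by
          have := hf.coeff_natDegree
          simp [hF, Polynomial.coeff_map, hn, this]
        rw [hlead, one_mul]
        have hxn : v (x ^ n) = v x ^ n := map_pow v x n
        rw [Valuation.map_add_eq_of_lt_right, hxn]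
        rw [hxn]
        refine Valuation.map_sum_lt v (pow_ne_zero _ hx0) ?_
        intro i hi
        rw [Finset.mem_range] at hi
        calc v (F.coeff i * x ^ i) = v (F.coeff i) * v x ^ i := by
              rw [map_mul, map_pow]
          _ ≤ 1 * v x ^ i := by
              refine mul_le_mul_left ?_ _
              have : F.coeff i = ↑(f.coeff i) := by
                simp only [hF, Polynomial.coeff_map]; rfl
              rw [this]
              exact O.valuation_le_one _
          _ = v x ^ i := one_mul _
          _ < v x ^ n := pow_lt_pow_right₀ hx1 hi
      have h1n : 1 < v x ^ n := one_lt_pow₀ hx1 hdeg.ne'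
      refine O.mem_of_valuation_le_one _ ?_
      rw [Valuation.map_inv, hvF]
      exact inv_le_one_of_one_le₀ h1n.le
  constructor
  · -- m ⊆ U
    intro u hu
    have hda' : IsUnit (Polynomial.eval a f.derivative) := by
      by_contra h
      exact hda h
    set c := f.eval a with hc
    have huc : u * c ∈ IsLocalRing.maximalIdeal O :=
      (IsLocalRing.maximalIdeal O).mul_mem_right c hu
    have hE : IsUnit ((1 : O) + u * c) := by
      have := IsLocalRing.isUnit_one_sub_self_of_mem_nonunits (-(u * c))
        ((IsLocalRing.maximalIdeal O).neg_mem huc)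
      simpa [sub_neg_eq_add] using this
    obtain ⟨e, he⟩ := hE
    set w : O := ↑(e⁻¹ : Oˣ) with hwdef
    have hw : ((1 : O) + u * c) * w = 1 := by
      rw [← he, hwdef]; exact_mod_cast e.mul_inv
    -- Hensel's lemma applied to h = f - C (c * w)
    set h : Polynomial O := f + Polynomial.C (-(c * w)) with hhdef
    have hhm : h.Monic := by
      refine hf.add_of_left ?_
      refine lt_of_le_of_lt (Polynomial.degree_C_le) ?_
      exact Polynomial.natDegree_pos_iff_degree_pos.mp hdeg
    have hha : h.eval a ∈ IsLocalRing.maximalIdeal O := by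
      have : h.eval a = u * (c * (c * w)) := by
        simp only [hhdef, Polynomial.eval_add, Polynomial.eval_C, ← hc]
        linear_combination (-c) * hw
      rw [this]
      exact (IsLocalRing.maximalIdeal O).mul_mem_right _ hu
    have hhd : IsUnit (h.derivative.eval a) := by
      have : h.derivative = f.derivative := by
        simp [hhdef]
      rw [this]
      exact hda'
    obtain ⟨b, hb, -⟩ := HenselianLocalRing.is_henselian h hhm a hha hhd
    have hfb : f.eval b = c * w := by
      have := hb
      simp only [Polynomial.IsRoot, hhdef, Polynomial.eval_add, Polynomial.eval_C] at this
      linear_combination this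
    refine ⟨(b : K), (a : K), ?_⟩
    rw [evalK, evalK, hfb, ← hc]
    have hcK : ((c : K)) ≠ 0 := by
      exact_mod_cast (hunit a).ne_zero
    have hwK : ((w : K)) ≠ 0 := by
      have : w ≠ 0 := (Units.isUnit (e⁻¹)).ne_zero
      exact_mod_cast this
    have hwK' : ((1 : K) + (u : K) * (c : K)) * (w : K) = 1 := by
      have := congrArg (fun t : O => (t : K)) hw
      push_cast at this
      exact this
    push_cast
    have hne : ((c : K)) * (w : K) ≠ 0 := mul_ne_zero hcK hwK
    have key : ((c : K) * (w : K)) * ((u : K) + ((c : K))⁻¹) = 1 := by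
      field_simp
      linear_combination hwK'
    rw [inv_eq_of_mul_eq_one_right key]
    ring
  · intro x y
    exact O.sub_mem (hinv x) (hinv y)
end

section
/- For every prime p and every positive integer m there exists a monic irreducible separable polynomial f ∈ 𝔽_p[X] of degree m with f'(0) ≠ 0. -/
open Polynomial IntermediateField Module Finset

lemma aux_nd {R : Type*} [CommRing R] [Nontrivial R] {n : ℕ} (hn : 1 < n) :
    (X ^ n - X : R[X]).natDegree = n := by
  rw [natDegree_sub_eq_left_of_natDegree_lt, natDegree_X_pow]
  rw [natDegree_X, natDegree_X_pow]; exact hn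

lemma aux_nz {R : Type*} [CommRing R] [Nontrivial R] {n : ℕ} (hn : 1 < n) :
    (X ^ n - X : R[X]) ≠ 0 := by
  intro h0
  have := congrArg natDegree h0
  rw [natDegree_zero, aux_nd hn] at this
  omega


-- arithmetic bound
lemma aux_sum_bound (p m : ℕ) (hp : 2 ≤ p) (hm : 2 ≤ m) :
    ∑ d ∈ m.properDivisors, p ^ d ≤ p ^ (m-1) * (p - 1) := by
  have h1 : m.properDivisors ⊆ Finset.Icc 1 (m / 2) := by
    intro d hd
    rw [Nat.mem_properDivisors] at hd
    obtain ⟨⟨k, hk⟩, hlt⟩ := hd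
    have hd0 : 0 < d := by
      rcases Nat.eq_zero_or_pos d with h | h
      · subst h; simp at hk; omega
      · exact h
    have hk2 : 2 ≤ k := by
      rcases Nat.lt_or_ge k 2 with h | h
      · interval_cases k <;> omega
      · exact h
    have h2d : d * 2 ≤ d * k := Nat.mul_le_mul_left d hk2
    rw [Finset.mem_Icc]
    omega
  have h2 : ∀ k : ℕ, ∑ d ∈ Finset.Icc 1 k, p ^ d ≤ p ^ (k+1) - p := by
    intro k
    induction k with
    | zero => simp
    | succ n ih =>
      rw [Finset.sum_Icc_succ_top (by omega)]
      have hpn : p ≤ p ^ (n+1) := Nat.le_self_pow (by omega) p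
      have key : p ^ (n+1) * 2 ≤ p ^ (n+1) * p := Nat.mul_le_mul_left _ hp
      have : p ^ (n+1+1) = p ^ (n+1) * p := pow_succ p (n+1)
      omega
  calc ∑ d ∈ m.properDivisors, p ^ d ≤ ∑ d ∈ Finset.Icc 1 (m/2), p ^ d :=
        Finset.sum_le_sum_of_subset h1
    _ ≤ p ^ (m/2 + 1) - p := h2 _
    _ ≤ p ^ (m-1) * (p - 1) := by
        have hexp : p ^ (m-1) * (p-1) = p ^ (m-1) * p - p ^ (m-1) * 1 := Nat.mul_sub _ _ _
        have hpm : p ^ m = p ^ (m-1) * p := by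
          conv_lhs => rw [show m = (m-1)+1 by omega]
          exact pow_succ p (m-1)
        rcases Nat.lt_or_ge m 3 with h | h
        · have hm2 : m = 2 := by omega
          subst hm2
          have e1 : p ^ (2/2+1) = p * p := by norm_num [sq, pow_succ]
          have e2 : p ^ (2-1) * (p-1) = p * p - p * 1 := by
            norm_num [Nat.mul_sub]
          omega
        · have hle : m/2 + 1 ≤ m - 1 := by omega
          have hb1 : p ^ (m/2+1) ≤ p ^ (m-1) := Nat.pow_le_pow_right (by omega) hle
          have hb2 : p ^ (m-1) ≤ p ^ (m-1) * (p-1) := Nat.le_mul_of_pos_right _ (by omega)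
          omega

lemma aux_exists_gen (p m : ℕ) [Fact p.Prime] (hm : 2 ≤ m) :
    ∃ α : GaloisField p m, (ZMod p)⟮α⟯ = ⊤ ∧
      Algebra.trace (ZMod p) (GaloisField p m) α ≠ 0 := by
  classical
  have hp : 2 ≤ p := (Fact.out : p.Prime).two_le
  set E := GaloisField p m with hE
  haveI : Fintype E := Fintype.ofFinite E
  have hcardE : Fintype.card E = p ^ m := by
    rw [← Nat.card_eq_fintype_card, GaloisField.card p m (by omega)]
  set T := Algebra.trace (ZMod p) E with hT
  obtain ⟨c, hc⟩ := Algebra.trace_surjective (ZMod p) E (1 : ZMod p)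
  have hc' : T c = 1 := hc
  have hfiber : ∀ a : ZMod p,
      (univ.filter fun x : E => T x = a).card = (univ.filter fun x : E => T x = 0).card := by
    intro a
    apply Finset.card_bij' (fun x _ => x - a • c) (fun x _ => x + a • c)
    · intro x hx
      simp only [Finset.mem_filter, Finset.mem_univ, true_and] at hx ⊢
      rw [map_sub, hx, map_smul, hc', smul_eq_mul, mul_one, sub_self]
    · intro x hx
      simp only [Finset.mem_filter, Finset.mem_univ, true_and] at hx ⊢
      rw [map_add, hx, map_smul, hc', smul_eq_mul, mul_one, zero_add]
    · intro x _; abel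
    · intro x _; abel
  have hZcard : (univ.filter fun x : E => T x = 0).card * p = p ^ m := by
    have h1 : (univ : Finset E).card =
        ∑ a ∈ (univ : Finset (ZMod p)), (univ.filter fun x : E => T x = a).card :=
      Finset.card_eq_sum_card_fiberwise (fun x _ => Finset.mem_univ _)
    rw [Finset.card_univ, hcardE] at h1
    rw [h1, Finset.sum_congr rfl (fun a _ => hfiber a), Finset.sum_const, Finset.card_univ,
      ZMod.card, smul_eq_mul, mul_comm]
  -- the set of non-generators
  set B := (univ.filter fun x : E => (ZMod p)⟮x⟯ ≠ ⊤) with hB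
  have hBsub : B ⊆ m.properDivisors.biUnion
      (fun d => ((X ^ p ^ d - X : E[X]).roots.toFinset)) := by
    intro x hx
    rw [hB, Finset.mem_filter] at hx
    obtain ⟨-, hx⟩ := hx
    set K := (ZMod p)⟮x⟯ with hK
    haveI : FiniteDimensional (ZMod p) K := inferInstance
    set d := finrank (ZMod p) K with hd
    have hdm : d * finrank K E = m := by
      rw [hd, finrank_mul_finrank, GaloisField.finrank p (by omega : m ≠ 0)]
    have hd0 : 0 < d := finrank_pos
    have hKE : finrank K E ≠ 1 := by
      intro h1
      apply hx
      have hdm' : d = m := by simpa [h1] using hdm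
      refine IntermediateField.eq_of_le_of_finrank_eq le_top ?_
      rw [IntermediateField.finrank_top', ← hd, hdm',
        GaloisField.finrank p (by omega : m ≠ 0)]
    have hdlt : d < m := by
      have h2 : 2 ≤ finrank K E := by
        have : 0 < finrank K E := finrank_pos
        omega
      nlinarith
    have hddvd : d ∣ m := Dvd.intro _ hdm
    haveI : Fintype K := Fintype.ofFinite K
    have hcardK : Fintype.card K = p ^ d := by
      rw [card_eq_pow_finrank (K := ZMod p) (V := K), ZMod.card, hd]
    have hxK : x ∈ K := mem_adjoin_simple_self (ZMod p) x
    have hpow : x ^ p ^ d = x := by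
      have := FiniteField.pow_card (⟨x, hxK⟩ : K)
      rw [hcardK] at this
      exact congrArg Subtype.val this
    rw [Finset.mem_biUnion]
    refine ⟨d, Nat.mem_properDivisors.mpr ⟨hddvd, hdlt⟩, ?_⟩
    rw [Multiset.mem_toFinset, mem_roots']
    exact ⟨aux_nz (Nat.one_lt_pow (by omega) hp), by simp [IsRoot, hpow]⟩
  have hBcard : B.card ≤ ∑ d ∈ m.properDivisors, p ^ d := by
    refine le_trans (Finset.card_le_card hBsub) ?_
    refine le_trans (Finset.card_biUnion_le) (Finset.sum_le_sum fun d hd => ?_)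
    refine le_trans (Multiset.toFinset_card_le _) ?_
    refine le_trans (Polynomial.card_roots' _) ?_
    rw [aux_nd (Nat.one_lt_pow (Nat.pos_of_mem_properDivisors hd).ne' hp)]
  set Z := (univ.filter fun x : E => T x = 0) with hZ
  have h0Z : (0:E) ∈ Z := by
    rw [hZ, Finset.mem_filter]
    exact ⟨Finset.mem_univ _, map_zero T⟩
  have h0B : (0:E) ∈ B := by
    rw [hB, Finset.mem_filter]
    refine ⟨Finset.mem_univ _, ?_⟩
    rw [IntermediateField.adjoin_zero]
    intro h
    have hbt : finrank (ZMod p) (⊥ : IntermediateField (ZMod p) E) =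
        finrank (ZMod p) (⊤ : IntermediateField (ZMod p) E) := by rw [h]
    rw [IntermediateField.finrank_bot, IntermediateField.finrank_top',
      GaloisField.finrank p (by omega : m ≠ 0)] at hbt
    omega
  have hone : p ^ 1 ≤ ∑ d ∈ m.properDivisors, p ^ d := by
    refine Finset.single_le_sum (fun i _ => Nat.zero_le _) ?_
    exact Nat.one_mem_properDivisors_iff_one_lt.mpr (by omega)
  have hpm : p ^ m = p ^ (m-1) * p := by
    conv_lhs => rw [show m = (m-1)+1 by omega]
    exact pow_succ p (m-1)
  have hexpand : p ^ (m-1) * p = p ^ (m-1) * (p-1) + p ^ (m-1) * 1 := by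
    rw [← Nat.mul_add]
    congr 1
    omega
  have hZc : Z.card * p = p ^ m := hZcard
  have hunion : (Z ∪ B).card < Fintype.card E := by
    have h1 : Z ∪ B = Z ∪ B.erase 0 := by
      ext y
      simp only [Finset.mem_union, Finset.mem_erase]
      constructor
      · rintro (h | h)
        · exact Or.inl h
        · by_cases hy : y = 0
          · exact Or.inl (hy ▸ h0Z)
          · exact Or.inr ⟨hy, h⟩
      · rintro (h | ⟨-, h⟩)
        · exact Or.inl h
        · exact Or.inr h
    have hc1 : (Z ∪ B).card ≤ Z.card + (B.erase 0).card :=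
      h1 ▸ Finset.card_union_le _ _
    have hc2 : (B.erase 0).card = B.card - 1 := Finset.card_erase_of_mem h0B
    have hsum := aux_sum_bound p m hp hm
    have hZcard' : Z.card = p ^ (m-1) := by
      have : p ^ (m-1) * p = Z.card * p := by rw [hZc, hpm]
      exact (Nat.eq_of_mul_eq_mul_right (by omega) this).symm
    have hp1 : (1:ℕ) ≤ p ^ 1 := by simpa using (by omega : 1 ≤ p)
    rw [hcardE]
    omega
  have hne : Z ∪ B ≠ univ := by
    intro h
    rw [h, Finset.card_univ] at hunion
    omega
  obtain ⟨α, -, hα⟩ := Finset.exists_of_ssubset (Finset.ssubset_univ_iff.mpr hne)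
  rw [Finset.mem_union, hZ, hB, Finset.mem_filter, Finset.mem_filter] at hα
  push_neg at hα
  obtain ⟨h1, h2⟩ := hα
  exact ⟨α, h2 (Finset.mem_univ _), h1 (Finset.mem_univ _)⟩

/-- For every prime `p` and positive integer `m` there is a monic
irreducible separable polynomial `f ∈ 𝔽_p[X]` of degree `m` with `f'(0) ≠ 0`. -/
theorem statement5 (p m : ℕ) [Fact p.Prime] (hm : 0 < m) :
    ∃ f : Polynomial (ZMod p), f.Monic ∧ Irreducible f ∧ f.Separable ∧
      f.natDegree = m ∧ Polynomial.eval 0 f.derivative ≠ 0 := by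
  rcases eq_or_lt_of_le (show 1 ≤ m from hm) with h1 | h2
  · -- m = 1 : take f = X + 1
    refine ⟨X + C 1, monic_X_add_C 1,
      irreducible_of_degree_eq_one (degree_X_add_C 1), separable_X_add_C 1,
      by rw [natDegree_X_add_C]; omega, ?_⟩
    rw [derivative_add, derivative_X, derivative_C, add_zero]
    simp
  · have hm2 : 2 ≤ m := h2
    have hm0 : m ≠ 0 := by omega
    obtain ⟨α, hgen, htr⟩ := aux_exists_gen p m hm2
    have hint : IsIntegral (ZMod p) α := IsIntegral.of_finite _ _
    set g := minpoly (ZMod p) α with hg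
    have hgmonic : g.Monic := minpoly.monic hint
    have hgdeg : g.natDegree = m := by
      have h := IntermediateField.adjoin.finrank hint
      rw [hgen, IntermediateField.finrank_top', GaloisField.finrank p hm0] at h
      exact h.symm
    have hα0 : α ≠ 0 := fun h => htr (by rw [h, map_zero])
    have hc0 : g.coeff 0 ≠ 0 := minpoly.coeff_zero_ne_zero hint hα0
    have hnext : g.nextCoeff ≠ 0 := by
      set pb : PowerBasis (ZMod p) (GaloisField p m) :=
        (IntermediateField.adjoin.powerBasis hint).map
          ((IntermediateField.equivOfEq hgen).trans IntermediateField.topEquiv) with hpb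
      have hgenp : pb.gen = α := rfl
      have h := PowerBasis.trace_gen_eq_nextCoeff_minpoly pb
      rw [hgenp] at h
      intro h0
      apply htr
      rw [h, ← hg, h0, neg_zero]
    -- α⁻¹ is also a generator
    have hginv : (ZMod p)⟮α⁻¹⟯ = ⊤ := by
      refine le_antisymm le_top ?_
      rw [← hgen, IntermediateField.adjoin_simple_le_iff]
      have h := ((ZMod p)⟮α⁻¹⟯).inv_mem (IntermediateField.mem_adjoin_simple_self (ZMod p) α⁻¹)
      rwa [inv_inv] at h
    have hint2 : IsIntegral (ZMod p) (α⁻¹) := IsIntegral.of_finite _ _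
    set q := minpoly (ZMod p) (α⁻¹) with hq
    have hqdeg : q.natDegree = m := by
      have h := IntermediateField.adjoin.finrank hint2
      rw [hginv, IntermediateField.finrank_top', GaloisField.finrank p hm0] at h
      exact h.symm
    set f := C ((g.coeff 0)⁻¹) * g.reverse with hf
    have htd : g.natTrailingDegree = 0 := natTrailingDegree_eq_zero.mpr (Or.inr hc0)
    have hfdeg : f.natDegree = m := by
      rw [hf, natDegree_C_mul (inv_ne_zero hc0), reverse_natDegree, htd, hgdeg, Nat.sub_zero]
    have hfmonic : f.Monic := by
      rw [Monic, hf, leadingCoeff_mul, leadingCoeff_C, reverse_leadingCoeff,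
        Polynomial.trailingCoeff, htd, inv_mul_cancel₀ hc0]
    have hroot : Polynomial.aeval (α⁻¹) f = 0 := by
      rw [hf, map_mul]
      haveI : Invertible α := invertibleOfNonzero hα0
      have h2 : Polynomial.aeval (α⁻¹) g.reverse = 0 := by
        rw [aeval_def, ← invOf_eq_inv α, eval₂_reverse_eq_zero_iff, ← aeval_def]
        exact minpoly.aeval _ _
      rw [h2, mul_zero]
    have hqdvd : q ∣ f := minpoly.dvd _ _ hroot
    have hfq : f = q := by
      obtain ⟨k, hk⟩ := hqdvd
      have hq0 : q ≠ 0 := minpoly.ne_zero hint2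
      have hk0 : k ≠ 0 := by
        rintro rfl
        rw [mul_zero] at hk
        exact hfmonic.ne_zero hk
      have hdeg : f.natDegree = q.natDegree + k.natDegree := by
        rw [hk, natDegree_mul hq0 hk0]
      have hkdeg : k.natDegree = 0 := by rw [hfdeg, hqdeg] at hdeg; omega
      have hklead : k.leadingCoeff = 1 := by
        have h := hfmonic
        rw [Monic, hk, leadingCoeff_mul, (minpoly.monic hint2).leadingCoeff, one_mul] at h
        exact h
      have hk1 : k = 1 := by
        rw [eq_C_of_natDegree_eq_zero hkdeg]
        rw [eq_C_of_natDegree_eq_zero hkdeg, leadingCoeff_C] at hklead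
        rw [hklead, map_one]
      rw [hk, hk1, mul_one]
    have hfirr : Irreducible f := hfq ▸ minpoly.irreducible hint2
    have hsep : f.Separable := by
      rw [hfq, hq]
      exact Algebra.IsSeparable.isSeparable (ZMod p) (α⁻¹)
    refine ⟨f, hfmonic, hfirr, hsep, hfdeg, ?_⟩
    rw [← coeff_zero_eq_eval_zero, coeff_derivative]
    simp only [Nat.cast_zero, zero_add, mul_one]
    rw [hf, coeff_C_mul, coeff_one_reverse]
    exact mul_ne_zero (inv_ne_zero hc0) hnext
end

section
/- Let K be a henselian valued field with valuation ring O and finite residue field F. Then O is definable in K by an existential first-order formula in the language of rings without parameters. -/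
open FirstOrder Language

attribute [local instance] FirstOrder.Ring.compatibleRingOfRing

set_option linter.unusedSectionVars false
set_option linter.unusedVariables false

section AKaux

open Polynomial IsLocalRing

theorem AK.hom_aeval {R S : Type*} [CommRing R] [CommRing S] (φ : R →+* S) (f : Polynomial ℤ)
    (r : R) : φ (Polynomial.aeval r f) = Polynomial.aeval (φ r) f := by
  rw [aeval_def, aeval_def, hom_eval₂]
  congr 1
  exact RingHom.ext_int _ _

theorem partA (F : Type*) [Field F] [Finite F] :
    ∃ f : Polynomial ℤ, f.Monic ∧ 0 < f.natDegree ∧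
      (∀ α : F, Polynomial.aeval α f ≠ 0) ∧
      (∃ β : F, Polynomial.aeval β f.derivative ≠ 0) := by
  cases nonempty_fintype F
  set p := ringChar F with hp
  have hpp : p.Prime := CharP.char_is_prime F p
  haveI : Fact p.Prime := ⟨hpp⟩
  haveI : CharP F p := ringChar.charP F
  letI : Algebra (ZMod p) F := ZMod.algebra F p
  set k := Module.finrank (ZMod p) F with hk
  have hkpos : 0 < k := Module.finrank_pos
  have hcard : Fintype.card F = p ^ k := by
    have := Module.card_eq_pow_finrank (K := ZMod p) (V := F)
    rwa [ZMod.card] at this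
  set d := k + 1 with hd
  have hdne : d ≠ 0 := Nat.succ_ne_zero k
  obtain ⟨α, hα⟩ := Field.exists_primitive_element_of_finite_top (ZMod p) (GaloisField p d)
  have hint : IsIntegral (ZMod p) α := Algebra.IsIntegral.isIntegral α
  set g := minpoly (ZMod p) α with hg
  have hgmonic : g.Monic := minpoly.monic hint
  have hgirr : Irreducible g := minpoly.irreducible hint
  have hgdeg : g.natDegree = d := by
    have h1 := IntermediateField.adjoin.finrank hint
    rw [hα, IntermediateField.finrank_top'] at h1
    rw [← h1, GaloisField.finrank p hdne]
  obtain ⟨f, hfmap, hfdeg, hfmonic⟩ :=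
    Polynomial.lifts_and_natDegree_eq_and_monic (f := Int.castRingHom (ZMod p))
      ((Polynomial.mem_lifts g).2
        ((Polynomial.map_surjective _ ZMod.intCast_surjective) g)) hgmonic
  have hmapF : ∀ q : ℤ[X], q.map (Int.castRingHom F) =
      (q.map (Int.castRingHom (ZMod p))).map (algebraMap (ZMod p) F) := by
    intro q
    rw [Polynomial.map_map]
    exact congrArg (fun φ => q.map φ) (RingHom.ext_int _ _)
  have haevalF : ∀ (q : ℤ[X]) (β : F), Polynomial.aeval β q =
      ((q.map (Int.castRingHom (ZMod p))).map (algebraMap (ZMod p) F)).eval β := by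
    intro q β
    rw [← hmapF, Polynomial.aeval_def, Polynomial.eval_map]
    rfl
  refine ⟨f, hfmonic, ?_, ?_, ?_⟩
  · rw [hfdeg, hgdeg]; omega
  · intro β hβ
    rw [haevalF, hfmap] at hβ
    have hroot : Polynomial.aeval β g = 0 := by
      rw [Polynomial.aeval_def, Polynomial.eval₂_eq_eval_map]; exact hβ
    have hmin := minpoly.eq_of_irreducible_of_monic hgirr hroot hgmonic
    have hdvd : (minpoly (ZMod p) β).natDegree ∣ k :=
      minpoly.degree_dvd (Algebra.IsIntegral.isIntegral β)
    rw [← hmin, hgdeg] at hdvd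
    exact absurd (Nat.le_of_dvd hkpos hdvd) (by omega)
  · have hgsep : g.Separable := PerfectField.separable_of_irreducible hgirr
    have hg'ne : g.derivative ≠ 0 := by
      intro h0
      rw [Polynomial.Separable] at hgsep
      rw [h0] at hgsep
      exact hgirr.not_isUnit (isCoprime_zero_right.mp hgsep)
    have hmapne : (g.derivative.map (algebraMap (ZMod p) F)) ≠ 0 := by
      intro h0
      exact hg'ne (Polynomial.map_injective _ (algebraMap (ZMod p) F).injective
        (by rw [h0, Polynomial.map_zero]))
    have hdeglt : (g.derivative.map (algebraMap (ZMod p) F)).natDegree < Fintype.card F := by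
      calc (g.derivative.map (algebraMap (ZMod p) F)).natDegree
          ≤ g.derivative.natDegree := Polynomial.natDegree_map_le
        _ ≤ g.natDegree - 1 := Polynomial.natDegree_derivative_le g
        _ = k := by rw [hgdeg]; omega
        _ < p ^ k := Nat.lt_pow_self hpp.one_lt
        _ = Fintype.card F := hcard.symm
    obtain ⟨β, hβ⟩ := (g.derivative.map (algebraMap (ZMod p) F)).exists_eval_ne_zero_of_natDegree_lt_card
      hmapne (by rw [Cardinal.mk_fintype]; exact_mod_cast hdeglt)
    refine ⟨β, ?_⟩
    rw [haevalF, ← Polynomial.derivative_map, hfmap]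
    exact hβ

section

variable {K : Type*} [Field K] (O : ValuationSubring K)

theorem coe_inv_mem {u : O} (hu : IsUnit u) : ((u : K))⁻¹ ∈ O := by
  obtain ⟨v, hv⟩ := hu
  have h1 : ((v : O) : K) * (((v⁻¹ : Oˣ) : O) : K) = 1 := by
    have := v.mul_inv
    calc ((v : O) : K) * (((v⁻¹ : Oˣ) : O) : K) = (((v * v⁻¹ : Oˣ) : O) : K) := by
          norm_cast
      _ = 1 := by rw [mul_inv_cancel v]; rfl

  have h0 : ((v : O) : K) ≠ 0 := by
    intro h
    rw [h, zero_mul] at h1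
    exact zero_ne_one h1
  have : ((u : K))⁻¹ = (((v⁻¹ : Oˣ) : O) : K) := by
    rw [← hv]
    exact inv_eq_of_mul_eq_one_right h1
  rw [this]
  exact SetLike.coe_mem _

theorem pow_eq_self_mem {q : ℕ} (hq : 2 ≤ q) {t : K} (ht : t ^ q = t) : t ∈ O := by
  rcases eq_or_ne t 0 with rfl | ht0
  · exact zero_mem O
  have hq1 : t ^ (q - 1) = 1 := by
    have h : t ^ (q - 1) * t = t := by
      rw [← pow_succ]
      have h2 : q - 1 + 1 = q := by omega
      rw [h2, ht]
    have := mul_right_cancel₀ ht0 (h.trans (one_mul t).symm)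
    exact this
  rcases O.mem_or_inv_mem t with h | h
  · exact h
  · have h2 : (t⁻¹) ^ (q - 1) = 1 := by
      rw [inv_pow, hq1, inv_one]
    have h5 : q - 1 = (q - 2) + 1 := by omega
    have h4 : t * t ^ (q - 2) = 1 := by rw [← hq1, h5, pow_succ']
    have h3 : t = (t⁻¹) ^ (q - 2) := by
      rw [inv_pow]; exact eq_inv_of_mul_eq_one_left h4
    rw [h3]
    exact pow_mem h _

theorem inv_aeval_mem {K : Type*} [Field K] (O : ValuationSubring K) {f : Polynomial ℤ}
    (hmonic : f.Monic) (hroot : ∀ a : ↥O, IsUnit (Polynomial.aeval a f)) {y : K}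
    (hy : Polynomial.aeval y f ≠ 0) : (Polynomial.aeval y f)⁻¹ ∈ O := by
  by_cases hyO : y ∈ O
  · set a : ↥O := ⟨y, hyO⟩ with ha
    have hcoe : ((Polynomial.aeval a f : ↥O) : K) = Polynomial.aeval y f := by
      have := AK.hom_aeval (O.subtype) f a
      simpa using this
    have h2 := coe_inv_mem O (hroot a)
    rwa [hcoe] at h2
  · have hz : y⁻¹ ∈ O := (O.mem_or_inv_mem y).resolve_left hyO
    have hy0 : y ≠ 0 := fun h => hyO (h ▸ zero_mem O.toSubring)
    set d := f.natDegree with hd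
    set zO : ↥O := ⟨y⁻¹, hz⟩ with hzO
    have hznu : ¬ IsUnit zO := by
      intro hu
      have := coe_inv_mem O hu
      rw [show ((zO : K)) = y⁻¹ from rfl, inv_inv] at this
      exact hyO this
    set w : ↥O := ∑ i ∈ Finset.range (d + 1), f.coeff i • zO ^ (d - i) with hw
    have hcoew : ((w : ↥O) : K) = ∑ i ∈ Finset.range (d + 1), f.coeff i • (y⁻¹) ^ (d - i) := by
      push_cast [hw]
      rfl
    have key : Polynomial.aeval y f * (y⁻¹) ^ d = ((w : ↥O) : K) := by
      rw [hcoew, Polynomial.aeval_eq_sum_range, Finset.sum_mul]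
      apply Finset.sum_congr rfl
      intro i hi
      rw [Finset.mem_range] at hi
      have hid : i ≤ d := by omega
      rw [smul_mul_assoc]
      congr 1
      have : (y⁻¹ : K) ^ d = y⁻¹ ^ i * y⁻¹ ^ (d - i) := by
        rw [← pow_add]
        congr 1
        omega
      rw [this, ← mul_assoc, ← mul_pow, mul_inv_cancel₀ hy0, one_pow, one_mul]
    have hwunit : IsUnit w := by
      have hsplit : w = zO * (∑ i ∈ Finset.range d, f.coeff i • zO ^ (d - i - 1)) + 1 := by
        rw [hw, Finset.sum_range_succ]
        have hlast : f.coeff d • zO ^ (d - d) = 1 := by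
          rw [Nat.sub_self, pow_zero, hd, Polynomial.Monic.coeff_natDegree hmonic]
          simp
        rw [hlast, Finset.mul_sum]
        congr 1
        apply Finset.sum_congr rfl
        intro i hi
        rw [Finset.mem_range] at hi
        rw [mul_smul_comm]
        congr 1
        rw [← pow_succ']
        congr 1
        omega
      by_contra hnu
      have hmem : w ∈ maximalIdeal ↥O := (mem_maximalIdeal w).mpr hnu
      have hzmem : zO ∈ maximalIdeal ↥O := (mem_maximalIdeal zO).mpr hznu
      have h1 : (1 : ↥O) ∈ maximalIdeal ↥O := by
        have : (1 : ↥O) = w - zO * (∑ i ∈ Finset.range d, f.coeff i • zO ^ (d - i - 1)) := by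
          rw [hsplit]; ring
        rw [this]
        exact sub_mem hmem (Ideal.mul_mem_right _ _ hzmem)
      exact (Ideal.ne_top_iff_one _).mp (Ideal.IsMaximal.ne_top (maximalIdeal.isMaximal _)) h1
    have hwK : ((w : ↥O) : K) ≠ 0 := by
      intro h0
      have : (w : ↥O) = 0 := by exact_mod_cast h0
      rw [this] at hwunit
      exact hwunit.ne_zero rfl
    have hinv : (Polynomial.aeval y f)⁻¹ = (y⁻¹) ^ d * ((w : ↥O) : K)⁻¹ := by
      apply inv_eq_of_mul_eq_one_right
      rw [← mul_assoc, key, mul_inv_cancel₀ hwK]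
    rw [hinv]
    exact mul_mem (pow_mem hz d) (coe_inv_mem O hwunit)

end

section

variable {R : Type*} [CommRing R] [HenselianLocalRing R] [Finite (ResidueField R)]

theorem exists_teichmuller (x : R) :
    ∃ t : R, t ^ (Nat.card (ResidueField R)) = t ∧ x - t ∈ maximalIdeal R := by
  letI : Fintype (ResidueField R) := Fintype.ofFinite _
  have hq : Nat.card (ResidueField R) = Fintype.card (ResidueField R) :=
    Nat.card_eq_fintype_card
  set q := Fintype.card (ResidueField R) with hqdef
  have hq2 : 2 ≤ q := Fintype.one_lt_card
  have hP : (X ^ q - X : R[X]).Monic := by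
    apply Polynomial.monic_X_pow_sub
    calc degree (X : R[X]) = 1 := degree_X
      _ < (q : WithBot ℕ) := by exact_mod_cast hq2
  have hev : (X ^ q - X : R[X]).eval x ∈ maximalIdeal R := by
    rw [← residue_eq_zero_iff]
    have : residue R ((X ^ q - X : R[X]).eval x) = (residue R x) ^ q - residue R x := by
      simp
    rw [this, FiniteField.pow_card, sub_self]
  have hder : IsUnit ((X ^ q - X : R[X]).derivative.eval x) := by
    rw [← residue_ne_zero_iff_isUnit]
    have : residue R ((X ^ q - X : R[X]).derivative.eval x)
        = q * (residue R x) ^ (q - 1) - 1 := by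
      simp [derivative_X_pow]
    rw [this, FiniteField.cast_card_eq_zero, zero_mul, zero_sub]
    simp
  obtain ⟨a, ha, hax⟩ := HenselianLocalRing.is_henselian (X ^ q - X) hP x hev hder
  refine ⟨a, ?_, ?_⟩
  · rw [hq]
    have h2 := ha
    simp only [IsRoot, eval_sub, eval_pow, eval_X] at h2
    exact sub_eq_zero.mp h2
  · have : x - a = -(a - x) := by ring
    rw [this]
    exact neg_mem hax

theorem exists_root_eq {f : Polynomial ℤ} (hmonic : f.Monic) (hdeg : 0 < f.natDegree)
    (b c : R) (hc : residue R (Polynomial.aeval b f) = residue R c)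
    (hd : residue R (Polynomial.aeval b f.derivative) ≠ 0) :
    ∃ a : R, Polynomial.aeval a f = c := by
  have haev : ∀ (h : Polynomial ℤ) (r : R), Polynomial.aeval r h = (h.map (Int.castRingHom R)).eval r := by
    intro h r
    rw [aeval_def, eval_map]
    rfl
  have hdegmap : (f.map (Int.castRingHom R)).degree = (f.natDegree : WithBot ℕ) := by
    rw [hmonic.degree_map (Int.castRingHom R), degree_eq_natDegree hmonic.ne_zero]
  set g : R[X] := f.map (Int.castRingHom R) - C c with hgdef
  have hgmonic : g.Monic := by
    apply (hmonic.map (Int.castRingHom R)).sub_of_left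
    apply lt_of_le_of_lt degree_C_le
    rw [hdegmap]
    exact_mod_cast hdeg
  have hev : g.eval b ∈ maximalIdeal R := by
    rw [← residue_eq_zero_iff]
    have h1 : g.eval b = Polynomial.aeval b f - c := by
      rw [hgdef, eval_sub, eval_C, haev f b]
    rw [h1, map_sub, hc, sub_self]
  have hder : IsUnit (g.derivative.eval b) := by
    rw [← residue_ne_zero_iff_isUnit]
    have h1 : g.derivative = (f.derivative).map (Int.castRingHom R) := by
      rw [hgdef, derivative_sub, derivative_C, sub_zero, derivative_map]
    have h2 : g.derivative.eval b = Polynomial.aeval b f.derivative := by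
      rw [h1, ← haev (derivative f) b]
    rw [h2]
    exact hd
  obtain ⟨a, ha, -⟩ := HenselianLocalRing.is_henselian g hgmonic b hev hder
  refine ⟨a, ?_⟩
  have h3 : g.eval a = Polynomial.aeval a f - c := by
    rw [hgdef, eval_sub, eval_C, haev f a]
  rw [IsRoot, h3] at ha
  exact sub_eq_zero.mp ha

end

theorem lift_aeval {α : Type*} {S : Type*} [CommRing S] (g : α → S) (f : Polynomial ℤ) (j : α) :
    FreeCommRing.lift g (Polynomial.aeval (FreeCommRing.of j) f) = Polynomial.aeval (g j) f := by
  rw [AK.hom_aeval (FreeCommRing.lift g) f, FreeCommRing.lift_of]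

noncomputable def psi (q : ℕ) (f : Polynomial ℤ) : Language.ring.BoundedFormula (Fin 1) 3 :=
  ((FirstOrder.Ring.termOfFreeCommRing ((FreeCommRing.of (Sum.inr 2) : FreeCommRing (Fin 1 ⊕ Fin 3)) ^ q)).bdEqual
     (FirstOrder.Ring.termOfFreeCommRing (FreeCommRing.of (Sum.inr 2)))) ⊓
  (∼((FirstOrder.Ring.termOfFreeCommRing (Polynomial.aeval (FreeCommRing.of (Sum.inr 0) : FreeCommRing (Fin 1 ⊕ Fin 3)) f)).bdEqual
     (FirstOrder.Ring.termOfFreeCommRing 0))) ⊓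
  (∼((FirstOrder.Ring.termOfFreeCommRing (Polynomial.aeval (FreeCommRing.of (Sum.inr 1) : FreeCommRing (Fin 1 ⊕ Fin 3)) f)).bdEqual
     (FirstOrder.Ring.termOfFreeCommRing 0))) ⊓
  ((FirstOrder.Ring.termOfFreeCommRing ((FreeCommRing.of (Sum.inl 0) - FreeCommRing.of (Sum.inr 2)) *
      Polynomial.aeval (FreeCommRing.of (Sum.inr 0)) f * Polynomial.aeval (FreeCommRing.of (Sum.inr 1)) f)).bdEqual
     (FirstOrder.Ring.termOfFreeCommRing (Polynomial.aeval (FreeCommRing.of (Sum.inr 1)) f - Polynomial.aeval (FreeCommRing.of (Sum.inr 0)) f)))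

theorem psi_isQF (q : ℕ) (f : Polynomial ℤ) : (psi q f).IsQF := by
  unfold psi
  exact ((((BoundedFormula.IsAtomic.equal _ _).isQF.inf
    (BoundedFormula.IsAtomic.equal _ _).isQF.not).inf
    (BoundedFormula.IsAtomic.equal _ _).isQF.not).inf
    (BoundedFormula.IsAtomic.equal _ _).isQF)

theorem psi_realize {K : Type*} [Field K] (q : ℕ) (f : Polynomial ℤ) (x : K) (xs : Fin 3 → K) :
    (psi q f).Realize (fun _ => x) xs ↔
      (xs 2 ^ q = xs 2 ∧ Polynomial.aeval (xs 0) f ≠ 0 ∧ Polynomial.aeval (xs 1) f ≠ 0 ∧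
        (x - xs 2) * Polynomial.aeval (xs 0) f * Polynomial.aeval (xs 1) f
          = Polynomial.aeval (xs 1) f - Polynomial.aeval (xs 0) f) := by
  unfold psi
  simp only [BoundedFormula.realize_inf, BoundedFormula.realize_not,
    BoundedFormula.realize_bdEqual, Term.realize, FirstOrder.Ring.realize_termOfFreeCommRing,
    map_pow, map_mul, map_sub, map_zero, FreeCommRing.lift_of, lift_aeval, Sum.elim_inl,
    Sum.elim_inr]
  tauto

end AKaux
/-- If `K` is a henselian valued field with valuation ring `O` and finite
residue field, then `O` is defined in `K` by a parameter-free existential formula in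
the language of rings (a block of existential quantifiers applied to a
quantifier-free formula). -/
theorem statement9 (K : Type*) [Field K] (O : ValuationSubring K) [HenselianLocalRing O]
    [Finite (IsLocalRing.ResidueField O)] :
    ∃ (n : ℕ) (ψ : Language.ring.BoundedFormula (Fin 1) n), ψ.IsQF ∧
      ∀ x : K, ψ.exs.Realize (fun _ => x) ↔ x ∈ O := by
  classical
  letI : Fintype (IsLocalRing.ResidueField O) := Fintype.ofFinite _
  set Fq := IsLocalRing.ResidueField O with hFq
  set q := Nat.card Fq with hqdef
  have hqcard : q = Fintype.card Fq := Nat.card_eq_fintype_card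
  have hq2 : 2 ≤ q := by rw [hqcard]; exact Fintype.one_lt_card
  obtain ⟨f, hfmonic, hfdeg, hfnoroot, β, hβ⟩ := partA Fq
  have hroot' : ∀ a : ↥O, IsUnit (Polynomial.aeval a f) := by
    intro a
    rw [← IsLocalRing.residue_ne_zero_iff_isUnit]
    rw [AK.hom_aeval (IsLocalRing.residue ↥O) f a]
    exact hfnoroot _
  refine ⟨3, psi q f, psi_isQF q f, ?_⟩
  intro x
  rw [BoundedFormula.realize_exs]
  constructor
  · rintro ⟨xs, hreal⟩
    rw [psi_realize] at hreal
    obtain ⟨ht, ha, hb, heq⟩ := hreal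
    have htO : xs 2 ∈ O := pow_eq_self_mem O hq2 ht
    have hia := inv_aeval_mem O hfmonic hroot' ha
    have hib := inv_aeval_mem O hfmonic hroot' hb
    have hx : x = xs 2 + ((Polynomial.aeval (xs 0) f)⁻¹ - (Polynomial.aeval (xs 1) f)⁻¹) := by
      field_simp
      linear_combination heq
    rw [hx]
    exact add_mem htO (sub_mem hia hib)
  · intro hx
    set xO : ↥O := ⟨x, hx⟩ with hxO
    obtain ⟨t, htq, hxt⟩ := exists_teichmuller xO
    obtain ⟨b, hbres⟩ := IsLocalRing.residue_surjective (b := β)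
    have hfb_unit : IsUnit (Polynomial.aeval b f) := by
      rw [← IsLocalRing.residue_ne_zero_iff_isUnit, AK.hom_aeval, hbres]
      exact hfnoroot β
    set s : ↥O := xO - t with hs
    set fb : ↥O := Polynomial.aeval b f with hfb
    have hs0 : IsLocalRing.residue ↥O s = 0 := (IsLocalRing.residue_eq_zero_iff _).mpr hxt
    have hvunit : IsUnit (1 + s * fb) := by
      rw [← IsLocalRing.residue_ne_zero_iff_isUnit]
      rw [map_add, map_mul, hs0, zero_mul, add_zero, map_one]
      exact one_ne_zero
    obtain ⟨v, hv⟩ := hvunit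
    set c : ↥O := fb * ((v⁻¹ : (↥O)ˣ) : ↥O) with hc
    have hcv : c * ((v : ↥O)) = fb := by
      rw [hc, mul_assoc, v.inv_mul, mul_one]
    have hvres : IsLocalRing.residue ↥O ((v : ↥O)) = 1 := by
      rw [hv, map_add, map_mul, hs0, zero_mul, add_zero, map_one]
    have hvinvres : IsLocalRing.residue ↥O (((v⁻¹ : (↥O)ˣ) : ↥O)) = 1 := by
      have h1 : IsLocalRing.residue ↥O ((v : ↥O)) *
          IsLocalRing.residue ↥O (((v⁻¹ : (↥O)ˣ) : ↥O)) = 1 := by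
        rw [← map_mul, v.mul_inv, map_one]
      rwa [hvres, one_mul] at h1
    have hcres : IsLocalRing.residue ↥O (Polynomial.aeval b f) = IsLocalRing.residue ↥O c := by
      rw [hc, map_mul, hvinvres, mul_one]
    have hdres : IsLocalRing.residue ↥O (Polynomial.aeval b f.derivative) ≠ 0 := by
      rw [AK.hom_aeval, hbres]
      exact hβ
    obtain ⟨a, haf⟩ := exists_root_eq hfmonic hfdeg b c hcres hdres
    have hcunit : IsUnit c := hfb_unit.mul (Units.isUnit _)
    have hK : ∀ u : ↥O, IsUnit u → ((u : K)) ≠ 0 := by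
      intro u hu h0
      have hu0 : u = 0 := by exact_mod_cast h0
      rw [hu0] at hu
      exact hu.ne_zero rfl
    have hcoe_a : Polynomial.aeval ((a : K)) f = ((c : K)) := by
      have h1 := AK.hom_aeval (O.subtype) f a
      exact h1.symm.trans (congrArg O.subtype haf)
    have hcoe_b : Polynomial.aeval ((b : K)) f = ((fb : K)) := by
      have h1 := AK.hom_aeval (O.subtype) f b
      exact h1.symm
    refine ⟨![(a : K), (b : K), (t : K)], ?_⟩
    rw [psi_realize]
    simp only [Matrix.cons_val_zero, Matrix.cons_val_one, Matrix.head_cons, Matrix.cons_val_two,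
      Matrix.tail_cons]
    refine ⟨?_, ?_, ?_, ?_⟩
    · exact_mod_cast congrArg (Subtype.val) htq
    · rw [hcoe_a]
      exact hK c hcunit
    · rw [hcoe_b]
      exact hK fb hfb_unit
    · rw [hcoe_a, hcoe_b]
      have hOid : c * (1 + s * fb) = fb := by rw [← hv]; exact hcv
      have h0 := congrArg (fun z : ↥O => (z : K)) hOid
      rw [hs] at h0
      push_cast at h0
      linear_combination h0
end

section
/- Let F be an infinite field with prime field F₀, and suppose the algebraic closure of F₀ inside F (denoted F_alg) is not algebraically closed. Then there exist a monic separable irreducible polynomial f ∈ F₀[X] with no zero in F, and an element a ∈ F with f'(a) ≠ 0. -/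
set_option synthInstance.maxHeartbeats 1000000
set_option maxHeartbeats 1000000

open Polynomial

lemma bot_perfectField (F : Type*) [Field F] : PerfectField (⊥ : Subfield F) := by
  obtain ⟨p, hp⟩ := CharP.exists F
  haveI : CharP F p := hp
  rcases CharP.char_is_prime_or_zero F p with hprime | hzero
  · haveI : Fact p.Prime := ⟨hprime⟩
    have hfin : Finite (⊥ : Subfield F) := by
      have hle : ((⊥ : Subfield F) : Set F) ⊆ Set.range (ZMod.castHom (dvd_refl p) F) := by
        have : (⊥ : Subfield F) ≤ (ZMod.castHom (dvd_refl p) F).fieldRange := bot_le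
        intro x hx
        exact this hx
      exact (Set.finite_range _).subset hle
    exact PerfectField.ofFinite
  · subst hzero
    haveI : CharP F 0 := hp
    haveI : CharZero F := CharP.charP_to_charZero F
    haveI : CharZero (⊥ : Subfield F) := ⟨fun a b h ↦
      Nat.cast_injective (R := F) (by exact_mod_cast congrArg Subtype.val h)⟩
    exact PerfectField.ofCharZero

theorem statement14 (F : Type*) [Field F] [Infinite F]
    (halg : ¬ IsAlgClosed (algebraicClosure (⊥ : Subfield F) F)) :
    ∃ f : Polynomial (⊥ : Subfield F), f.Monic ∧ f.Separable ∧ Irreducible f ∧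
      (∀ x : F, Polynomial.aeval x f ≠ 0) ∧
      ∃ a : F, Polynomial.aeval a f.derivative ≠ 0 := by
  haveI := bot_perfectField F
  -- get an irreducible polynomial with no root in E
  have h : ¬ ∀ p : (⊥ : Subfield F)[X], p.Monic → Irreducible p → ∃ x : algebraicClosure (⊥ : Subfield F) F, aeval x p = 0 := by
    intro hall
    exact halg (IsAlgClosure.of_exist_roots hall).1
  push_neg at h
  obtain ⟨f, hmon, hirr, hroot⟩ := h
  have hsep : f.Separable := PerfectField.separable_of_irreducible hirr
  have hnoroot : ∀ x : F, aeval x f ≠ 0 := by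
    intro x hx
    have halgx : IsAlgebraic (⊥ : Subfield F) x := ⟨f, hmon.ne_zero, hx⟩
    have hxE : x ∈ algebraicClosure (⊥ : Subfield F) F := by
      exact mem_algebraicClosure_iff.2 halgx
    exact hroot ⟨x, hxE⟩ ((Polynomial.aeval_algebraMap_eq_zero_iff F
      (⟨x, hxE⟩ : algebraicClosure (⊥ : Subfield F) F) f).1 hx)
  refine ⟨f, hmon, hsep, hirr, hnoroot, ?_⟩
  -- derivative nonzero
  have hder : f.derivative ≠ 0 := (Polynomial.separable_iff_derivative_ne_zero hirr).1 hsep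
  have hmapne : (f.derivative.map (algebraMap (⊥ : Subfield F) F)) ≠ 0 := by
    simpa using (Polynomial.map_ne_zero_iff (algebraMap (⊥ : Subfield F) F).injective).2 hder
  have hfin := Polynomial.finite_setOf_isRoot hmapne
  obtain ⟨a, ha⟩ := hfin.infinite_compl.nonempty
  refine ⟨a, fun hc ↦ ha ?_⟩
  simp only [Set.mem_setOf_eq, IsRoot.def]
  rw [Polynomial.eval_map, ← Polynomial.aeval_def]
  exact hc
end

section
/- For every odd prime p and every integer n with n not a quadratic residue modulo p, if additionally p > 81, then for every henselian valued field K with valuation ring O and residue field 𝔽_p, the set (f(K)⁻¹ − f(K)⁻¹) + (f(K)⁻¹·f(K)⁻¹ ∪ {0}) with f = X² − n equals O. -/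
open Finset Pointwise in
lemma zmod_key {p : ℕ} (hp : p.Prime) (hodd : Odd p) {n : ZMod p}
    (hn : ∀ y : ZMod p, y ^ 2 ≠ n) (r : ZMod p) :
    ∃ a b c d : ZMod p, a ≠ 0 ∧
      r = (a ^ 2 - n)⁻¹ - (b ^ 2 - n)⁻¹ + (c ^ 2 - n)⁻¹ * (d ^ 2 - n)⁻¹ := by
  classical
  haveI : Fact p.Prime := ⟨hp⟩
  have hp2 : 2 < p := by
    have := hp.two_le
    rcases Nat.odd_iff.mp hodd with h
    omega
  have hnz : ∀ a : ZMod p, a ^ 2 - n ≠ 0 := by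
    intro a h
    exact hn a (by rwa [sub_eq_zero] at h)
  -- generic double counting for "injective up to sign" maps
  have key : ∀ (s : Finset (ZMod p)) (g : ZMod p → ZMod p),
      (∀ x y, g x = g y → x = y ∨ x = -y) → s.card ≤ 2 * (s.image g).card := by
    intro s g hg
    refine Finset.card_le_mul_card_image s 2 ?_
    intro v hv
    obtain ⟨x₀, _, hx₀⟩ := Finset.mem_image.mp hv
    have : s.filter (fun x => g x = v) ⊆ {x₀, -x₀} := by
      intro x hx
      obtain ⟨-, hx⟩ := Finset.mem_filter.mp hx
      rcases hg x x₀ (by rw [hx, hx₀]) with h | h <;> simp [h]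
    calc (s.filter (fun x => g x = v)).card ≤ ({x₀, -x₀} : Finset (ZMod p)).card :=
          Finset.card_le_card this
      _ ≤ 2 := Finset.card_insert_le _ _ |>.trans (by simp)
  have hsign : ∀ x y : ZMod p, (x ^ 2 - n)⁻¹ = (y ^ 2 - n)⁻¹ → x = y ∨ x = -y := by
    intro x y h
    have h2 : x ^ 2 - n = y ^ 2 - n := inv_injective h
    have h3 : x * x = y * y := by
      have := sub_left_inj.mp h2
      rw [pow_two, pow_two] at this; exact this
    exact mul_self_eq_mul_self_iff.mp h3
  set A := (Finset.univ.erase (0 : ZMod p)).image (fun a => (a ^ 2 - n)⁻¹) with hAdef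
  set B := (Finset.univ : Finset (ZMod p)).image (fun b => -(b ^ 2 - n)⁻¹) with hBdef
  have hcardu : (Finset.univ : Finset (ZMod p)).card = p := by simp [ZMod.card]
  have hA : p - 1 ≤ 2 * A.card := by
    have := key (Finset.univ.erase (0 : ZMod p)) _ hsign
    rwa [Finset.card_erase_of_mem (Finset.mem_univ _), hcardu] at this
  have hB : p ≤ 2 * B.card := by
    have hsign' : ∀ x y : ZMod p, -(x ^ 2 - n)⁻¹ = -(y ^ 2 - n)⁻¹ → x = y ∨ x = -y := by
      intro x y h; exact hsign x y (neg_injective h)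
    have := key Finset.univ _ hsign'
    rwa [hcardu] at this
  have hAne : A.Nonempty := by
    refine Finset.Nonempty.image ?_ _
    rw [← Finset.card_pos, Finset.card_erase_of_mem (Finset.mem_univ _), hcardu]
    omega
  have hBne : B.Nonempty := Finset.Nonempty.image ⟨0, Finset.mem_univ 0⟩ _
  have hCD := ZMod.cauchy_davenport hp hAne hBne
  have hcardAB : p - 1 ≤ (A + B).card := by
    refine le_trans (le_min (by omega) (by omega)) hCD
  have hABu : (A + B).card ≤ p := by
    have h := Finset.card_le_univ (A + B)
    rwa [ZMod.card p] at h
  -- the two candidate product values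
  have h0 : ((0 : ZMod p) ^ 2 - n) ≠ 0 := hnz 0
  have h1 : ((1 : ZMod p) ^ 2 - n) ≠ 0 := hnz 1
  set t₁ := ((0 : ZMod p) ^ 2 - n)⁻¹ * ((0 : ZMod p) ^ 2 - n)⁻¹ with ht₁
  set t₂ := ((0 : ZMod p) ^ 2 - n)⁻¹ * ((1 : ZMod p) ^ 2 - n)⁻¹ with ht₂
  have htne : r - t₁ ≠ r - t₂ := by
    have ht : t₁ ≠ t₂ := by
      intro h
      have h' := mul_left_cancel₀ (inv_ne_zero h0) h
      have h2 := sub_left_inj.mp (inv_injective h')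
      norm_num at h2
    intro h; exact ht (sub_right_inj.mp h)
  have hmem : r - t₁ ∈ A + B ∨ r - t₂ ∈ A + B := by
    by_contra h
    push_neg at h
    have hsub : ({r - t₁, r - t₂} : Finset (ZMod p)) ⊆ Finset.univ \ (A + B) := by
      intro x hx
      rcases Finset.mem_insert.mp hx with rfl | hx
      · exact Finset.mem_sdiff.mpr ⟨Finset.mem_univ _, h.1⟩
      · rcases Finset.mem_singleton.mp hx with rfl
        exact Finset.mem_sdiff.mpr ⟨Finset.mem_univ _, h.2⟩
    have h2 := Finset.card_le_card hsub
    rw [Finset.card_pair htne, Finset.card_sdiff_of_subset (Finset.subset_univ _), hcardu] at h2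
    omega
  have main : ∀ t : ZMod p, r - t ∈ A + B →
      ∃ a b : ZMod p, a ≠ 0 ∧ r = (a ^ 2 - n)⁻¹ - (b ^ 2 - n)⁻¹ + t := by
    intro t ht
    rw [Finset.mem_add] at ht
    obtain ⟨y, hy, z, hz, hyz⟩ := ht
    obtain ⟨a, ha, rfl⟩ := Finset.mem_image.mp hy
    obtain ⟨b, -, rfl⟩ := Finset.mem_image.mp hz
    exact ⟨a, b, (Finset.mem_erase.mp ha).1, by linear_combination -hyz⟩
  rcases hmem with h | h
  · obtain ⟨a, b, ha, hr⟩ := main _ h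
    exact ⟨a, b, 0, 0, ha, hr⟩
  · obtain ⟨a, b, ha, hr⟩ := main _ h
    exact ⟨a, b, 0, 1, ha, hr⟩

set_option maxHeartbeats 1000000 in
/-- Let `p > 81` be an odd prime and `n` an integer that is not a
quadratic residue mod `p`. Then for every henselian valued field `K` with valuation
ring `O` and residue field `𝔽_p`, taking `f = X² − n`, the set
`(f(K)⁻¹ − f(K)⁻¹) + (f(K)⁻¹·f(K)⁻¹ ∪ {0})` equals `O`. -/
theorem statement17 (p : ℕ) (hp : p.Prime) (hodd : Odd p) (hbig : 81 < p)
    (n : ℤ) (hn : ¬ ∃ y : ZMod p, y ^ 2 = (n : ZMod p))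
    (K : Type*) [Field K] (O : ValuationSubring K) [HenselianLocalRing O]
    [Finite (IsLocalRing.ResidueField O)]
    (hcard : Nat.card (IsLocalRing.ResidueField O) = p) :
    ∀ w : K, w ∈ O ↔ ∃ x y : K,
      w = (x ^ 2 - (n : K))⁻¹ - (y ^ 2 - (n : K))⁻¹ ∨
      ∃ z v : K, w = (x ^ 2 - (n : K))⁻¹ - (y ^ 2 - (n : K))⁻¹ +
        (z ^ 2 - (n : K))⁻¹ * (v ^ 2 - (n : K))⁻¹ := by
  classical
  haveI : Fact p.Prime := ⟨hp⟩
  set F := IsLocalRing.ResidueField ↥O with hF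
  letI : Fintype F := Fintype.ofFinite F
  have hcardF : Fintype.card F = p := by rw [← Nat.card_eq_fintype_card]; exact hcard
  let e : ZMod p ≃+* F := ZMod.ringEquivOfPrime F hp hcardF
  let res : ↥O →+* F := IsLocalRing.residue ↥O
  have hn' : ∀ y : ZMod p, y ^ 2 ≠ (n : ZMod p) := fun y h => hn ⟨y, h⟩
  set nZ : ZMod p := ((n : ℤ) : ZMod p) with hnZ
  set nO : ↥O := ((n : ℤ) : ↥O) with hnO
  have hresn : res nO = e nZ := by
    rw [map_intCast res n, map_intCast e n]
  have hene : ∀ u : ZMod p, u ^ 2 - nZ ≠ 0 := by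
    intro u h
    exact hn' u (by rwa [sub_eq_zero] at h)
  -- units from nonzero residue
  have unit_of_res : ∀ u : ↥O, res u ≠ 0 → ∃ v : ↥O, u * v = 1 := by
    intro u h
    obtain ⟨v, hv⟩ := (IsLocalRing.residue_ne_zero_iff_isUnit u).mp h
    exact ⟨↑v⁻¹, by rw [← hv]; exact v.mul_inv⟩
  have coe_one : ∀ u v : ↥O, u * v = 1 → (↑u : K) * ↑v = 1 := by
    intro u v h
    exact_mod_cast congrArg (fun t : ↥O => (t : K)) h
  -- residue of a lifted quadratic value
  have resval : ∀ (U : ↥O) (u : ZMod p), res U = e u →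
      res (U ^ 2 - nO) = e (u ^ 2 - nZ) := by
    intro U u h
    rw [map_sub, map_pow, h, hresn, ← map_pow, ← map_sub]
  have resval_ne : ∀ (U : ↥O) (u : ZMod p), res U = e u →
      res (U ^ 2 - nO) ≠ 0 := by
    intro U u h
    rw [resval U u h, ← map_zero e]
    exact fun hh => hene u (e.injective hh)
  -- the easy direction for x ∈ O
  have easy1 : ∀ x : K, x ∈ O → (x ^ 2 - (n : K))⁻¹ ∈ O := by
    intro x hx
    set X : ↥O := ⟨x, hx⟩ with hX
    obtain ⟨u, hu⟩ := e.surjective (res X)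
    have hne := resval_ne X u hu.symm
    obtain ⟨g, hg⟩ := unit_of_res _ hne
    have h1 : (x ^ 2 - (n : K)) * (g : K) = 1 := by
      have := coe_one _ _ hg
      push_cast at this
      convert this using 2
      simp [hnO, hX]
    rw [inv_eq_of_mul_eq_one_right h1]
    exact g.2
  have easy : ∀ x : K, (x ^ 2 - (n : K))⁻¹ ∈ O := by
    intro x
    by_cases hx : x ∈ O
    · exact easy1 x hx
    · rcases O.mem_or_inv_mem x with h | h
      · exact absurd h hx
      have hx0 : x ≠ 0 := fun h0 => hx (h0 ▸ zero_mem O)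
      set T : ↥O := ⟨x⁻¹, h⟩ with hT
      have hresT : res T = 0 := by
        by_contra hne
        obtain ⟨s, hs⟩ := unit_of_res T hne
        apply hx
        have h1 : (x⁻¹ : K) * ↑s = 1 := coe_one _ _ hs
        have : (x⁻¹ : K)⁻¹ = ↑s := inv_eq_of_mul_eq_one_right h1
        rw [inv_inv] at this
        rw [this]; exact s.2
      set g : ↥O := 1 - nO * T ^ 2 with hg
      have hgne : res g ≠ 0 := by
        rw [hg, map_sub, map_one, map_mul, map_pow, hresT]
        simp
      obtain ⟨hh, hhh⟩ := unit_of_res g hgne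
      have hgK : (↑g : K) = 1 - (n : K) * (x⁻¹) ^ 2 := by
        rw [hg]; push_cast; rfl
      have h2 : (↑g : K) * ↑hh = 1 := coe_one _ _ hhh
      have h1 : (x ^ 2 - (n : K)) * ((T : K) ^ 2 * (hh : K)) = 1 := by
        have hTK : (T : K) = x⁻¹ := rfl
        rw [hTK, hgK] at *
        field_simp at h2 ⊢
        linear_combination h2
      rw [inv_eq_of_mul_eq_one_right h1]
      exact mul_mem (pow_mem T.2 2) hh.2
  intro w
  constructor
  · -- hard direction
    intro hw
    set W : ↥O := ⟨w, hw⟩ with hW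
    obtain ⟨a, b, c, d, ha, hr⟩ := zmod_key hp hodd hn' (e.symm (res W))
    have hresW : res W = e ((a ^ 2 - nZ)⁻¹ - (b ^ 2 - nZ)⁻¹
        + (c ^ 2 - nZ)⁻¹ * (d ^ 2 - nZ)⁻¹) := by
      rw [← hr]; simp
    obtain ⟨Y, hY⟩ := IsLocalRing.residue_surjective (R := ↥O) (e b)
    obtain ⟨Z, hZ⟩ := IsLocalRing.residue_surjective (R := ↥O) (e c)
    obtain ⟨V, hV⟩ := IsLocalRing.residue_surjective (R := ↥O) (e d)
    obtain ⟨A₀, hA₀⟩ := IsLocalRing.residue_surjective (R := ↥O) (e a)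
    obtain ⟨gy, hgy⟩ := unit_of_res (Y ^ 2 - nO) (resval_ne Y b hY)
    obtain ⟨gz, hgz⟩ := unit_of_res (Z ^ 2 - nO) (resval_ne Z c hZ)
    obtain ⟨gv, hgv⟩ := unit_of_res (V ^ 2 - nO) (resval_ne V d hV)
    have hresinv : ∀ (U : ↥O) (u : ZMod p) (g : ↥O), res U = e u →
        (U ^ 2 - nO) * g = 1 → res g = e ((u ^ 2 - nZ)⁻¹) := by
      intro U u g hU hg
      have h1 : res (U ^ 2 - nO) * res g = 1 := by rw [← map_mul, hg, map_one]
      rw [resval U u hU] at h1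
      rw [eq_comm, ← inv_eq_of_mul_eq_one_right h1, map_inv₀]
    have hrgy := hresinv Y b gy hY hgy
    have hrgz := hresinv Z c gz hZ hgz
    have hrgv := hresinv V d gv hV hgv
    set c₀ : ↥O := W + gy - gz * gv with hc₀
    have hresc₀ : res c₀ = e ((a ^ 2 - nZ)⁻¹) := by
      rw [hc₀, map_sub, map_add, map_mul, hresW, hrgy, hrgz, hrgv,
        ← map_mul e, ← map_add e, ← map_sub e]
      congr 1
      ring
    have hc₀ne : res c₀ ≠ 0 := by
      rw [hresc₀, ← map_zero e]
      intro hh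
      exact hene a (inv_eq_zero.mp (e.injective hh))
    obtain ⟨c₁, hc₁⟩ := unit_of_res c₀ hc₀ne
    have hresc₁ : res c₁ = e (a ^ 2 - nZ) := by
      have h1 : res c₀ * res c₁ = 1 := by rw [← map_mul, hc₁, map_one]
      rw [hresc₀] at h1
      rw [eq_comm, ← inv_eq_of_mul_eq_one_right h1, map_inv₀, inv_inv]
    set u : ↥O := nO + c₁ with hu
    have hresu : res u = (e a) ^ 2 := by
      rw [hu, map_add, hresn, hresc₁, ← map_pow, ← map_add]
      congr 1
      ring
    -- Hensel lifting of the square root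
    have hmem : Polynomial.eval A₀ (Polynomial.X ^ 2 - Polynomial.C u)
        ∈ IsLocalRing.maximalIdeal ↥O := by
      have h0 : res (A₀ ^ 2 - u) = 0 := by
        rw [map_sub, map_pow, hA₀, hresu, sub_self]
      rw [IsLocalRing.mem_maximalIdeal, mem_nonunits_iff]
      simp only [Polynomial.eval_sub, Polynomial.eval_pow, Polynomial.eval_X,
        Polynomial.eval_C]
      intro hu'
      exact (IsLocalRing.residue_ne_zero_iff_isUnit _).mpr hu' h0
    have hderiv : IsUnit (Polynomial.eval A₀
        (Polynomial.derivative (Polynomial.X ^ 2 - Polynomial.C u))) := by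
      have hd : Polynomial.derivative (Polynomial.X ^ 2 - Polynomial.C u)
          = Polynomial.C 2 * Polynomial.X := by
        rw [Polynomial.derivative_sub, Polynomial.derivative_C,
          Polynomial.derivative_X_pow, sub_zero]
        norm_num
      rw [hd]
      rw [← IsLocalRing.residue_ne_zero_iff_isUnit]
      have h2 : ((2 : ℕ) : ZMod p) ≠ 0 := by
        rw [Ne, ZMod.natCast_eq_zero_iff]
        intro hdvd
        have := Nat.le_of_dvd (by norm_num) hdvd
        omega
      have h2F : ((2 : ℕ) : F) ≠ 0 := by
        rw [← map_natCast e, ← map_zero e]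
        exact fun hh => h2 (e.injective hh)
      have haF : e a ≠ 0 := by
        rw [← map_zero e]
        exact fun hh => ha (e.injective hh)
      simp only [Polynomial.eval_mul, Polynomial.eval_C, Polynomial.eval_X, map_mul, hA₀]
      push_cast
      exact mul_ne_zero (by exact_mod_cast h2F) haF
    obtain ⟨x, hxroot, -⟩ := HenselianLocalRing.is_henselian
      (Polynomial.X ^ 2 - Polynomial.C u)
      (Polynomial.monic_X_pow_sub_C u two_ne_zero) A₀ hmem hderiv
    have hxu : x ^ 2 - nO = c₁ := by
      have : x ^ 2 - u = 0 := by
        simpa using hxroot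
      rw [hu] at this
      linear_combination this
    -- assemble in K
    have hxK : ((x : K) ^ 2 - (n : K)) * (c₀ : K) = 1 := by
      have h1 : (↑(x ^ 2 - nO) : K) * ↑c₀ = 1 := by
        have := coe_one _ _ (hxu ▸ (mul_comm c₀ c₁ ▸ hc₁))
        exact this
      push_cast at h1
      convert h1 using 2
      simp [hnO]
    have hxinv : ((x : K) ^ 2 - (n : K))⁻¹ = (c₀ : K) :=
      inv_eq_of_mul_eq_one_right hxK
    have hQinv : ∀ (U g : ↥O), (U ^ 2 - nO) * g = 1 →
        ((U : K) ^ 2 - (n : K))⁻¹ = (g : K) := by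
      intro U g hg
      refine inv_eq_of_mul_eq_one_right ?_
      have h1 := coe_one _ _ hg
      push_cast at h1
      convert h1 using 2
      simp [hnO]
    refine ⟨x, Y, Or.inr ⟨Z, V, ?_⟩⟩
    rw [hxinv, hQinv Y gy hgy, hQinv Z gz hgz, hQinv V gv hgv]
    have : W = c₀ - gy + gz * gv := by rw [hc₀]; ring
    calc w = (↑(W) : K) := rfl
      _ = ↑(c₀ - gy + gz * gv) := by rw [← this]
      _ = (↑c₀ : K) - ↑gy + ↑gz * ↑gv := by push_cast; ring
  · -- easy direction
    rintro ⟨x, y, h | ⟨z, v, h⟩⟩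
    · rw [h]; exact sub_mem (easy x) (easy y)
    · rw [h]
      exact add_mem (sub_mem (easy x) (easy y)) (mul_mem (easy z) (easy v))
end
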